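/- For coprime positive integers p, q with q odd, define c(q,p) = (1/p)·Σ_{k odd, 1 ≤ k ≤ 2p-1} cot(πk/(2p))·cot(πqk/(2p)). Then c(q,p) = -4·s(q,p) + 8·s(q,2p). -/

import Mathlib

open Finset Real

open Classical in
/-- The sawtooth function: 0 on integers, fractional part minus 1/2 otherwise. -/
noncomputable def saw (x : ℝ) : ℝ :=
  if ∃ n : ℤ, x = n then 0 else Int.fract x - 1/2

/-- The Dedekind sum s(q,p). -/
noncomputable def dedekindSum (q : ℤ) (p : ℕ) : ℝ :=
  ∑ μ ∈ Finset.range p, saw ((μ : ℝ) / p) * saw ((q : ℝ) * μ / p)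

/-- The Dedekind–Rademacher sum s(q,p;x,y). -/
noncomputable def drSum (q : ℤ) (p : ℕ) (x y : ℝ) : ℝ :=
  ∑ μ ∈ Finset.range p, saw (((μ : ℝ) + y) / p) * saw ((q : ℝ) * ((μ : ℝ) + y) / p + x)

/- ### saw lemmas -/

lemma saw_intCast (n : ℤ) : saw (n : ℝ) = 0 := by
  rw [saw, if_pos ⟨n, rfl⟩]

lemma saw_add_int (x : ℝ) (n : ℤ) : saw (x + n) = saw x := by
  have h : (∃ k : ℤ, x + (n:ℝ) = k) ↔ (∃ k : ℤ, x = k) := by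
    constructor
    · rintro ⟨k, hk⟩; exact ⟨k - n, by push_cast; linarith⟩
    · rintro ⟨k, hk⟩; exact ⟨k + n, by push_cast; linarith⟩
  rw [saw, saw, Int.fract_add_intCast]
  by_cases hx : ∃ k : ℤ, x = k
  · rw [if_pos (h.mpr hx), if_pos hx]
  · rw [if_neg (fun c => hx (h.mp c)), if_neg hx]

lemma saw_neg (x : ℝ) : saw (-x) = -saw x := by
  by_cases hx : ∃ k : ℤ, x = k
  · obtain ⟨k, rfl⟩ := hx
    rw [show -(k:ℝ) = ((-k : ℤ) : ℝ) by push_cast; ring, saw_intCast, saw_intCast]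
    ring
  · have hx' : ¬ ∃ k : ℤ, -x = k := by
      rintro ⟨k, hk⟩; exact hx ⟨-k, by push_cast; linarith⟩
    have hf : Int.fract x ≠ 0 := by
      intro h
      rw [Int.fract] at h
      exact hx ⟨⌊x⌋, by linarith⟩
    rw [saw, saw, if_neg hx', if_neg hx, Int.fract_neg hf]
    ring

lemma saw_eq_of_lt (μ p : ℕ) (h0 : 0 < μ) (hlt : μ < p) :
    saw ((μ : ℝ) / p) = (μ : ℝ) / p - 1/2 := by
  have hp : (0:ℝ) < p := by exact_mod_cast h0.trans hlt
  have hμ' : (0:ℝ) < (μ:ℝ) := by exact_mod_cast h0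
  have h1 : (0:ℝ) < (μ:ℝ) / p := div_pos hμ' hp
  have h2 : (μ:ℝ) / p < 1 := by
    rw [div_lt_one hp]; exact_mod_cast hlt
  have hni : ¬ ∃ n : ℤ, (μ:ℝ)/p = n := by
    rintro ⟨n, hn⟩
    rw [hn] at h1 h2
    have : 0 < n := by exact_mod_cast h1
    have : n < 1 := by exact_mod_cast h2
    omega
  rw [saw, if_neg hni, Int.fract_eq_self.mpr ⟨le_of_lt h1, h2⟩]

lemma saw_term (μ p : ℕ) (hμ : μ ∈ Finset.range p) :
    saw ((μ : ℝ) / p) = (μ : ℝ) / p - 1/2 + (if μ = 0 then (1:ℝ)/2 else 0) := by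
  rcases Nat.eq_zero_or_pos μ with h0 | h0
  · subst h0
    simp only [Nat.cast_zero, zero_div, if_pos rfl]
    have := saw_intCast 0
    norm_num at this
    rw [this]
    norm_num
  · rw [saw_eq_of_lt μ p h0 (Finset.mem_range.mp hμ), if_neg h0.ne']
    ring

lemma sum_saw (p : ℕ) (hp : 0 < p) : ∑ μ ∈ Finset.range p, saw ((μ : ℝ) / p) = 0 := by
  have hgauss : ∀ n : ℕ, ∑ μ ∈ Finset.range n, (μ : ℝ) = n * (n - 1) / 2 := by
    intro n
    induction n with
    | zero => simp
    | succ n ih =>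
      rw [Finset.sum_range_succ, ih]
      push_cast
      ring
  have hpne : (p:ℝ) ≠ 0 := by positivity
  rw [Finset.sum_congr rfl (fun μ hμ => saw_term μ p hμ)]
  rw [Finset.sum_add_distrib, Finset.sum_sub_distrib,
    Finset.sum_ite_eq' (Finset.range p) 0 (fun _ => (1:ℝ)/2),
    if_pos (Finset.mem_range.mpr hp), ← Finset.sum_div, hgauss p]
  simp only [Finset.sum_const, Finset.card_range, nsmul_eq_mul]
  field_simp
  ring
/- ### complex exponential lemmas -/

noncomputable def ec (p : ℕ) (n : ℤ) : ℂ :=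
  Complex.exp (2 * (Real.pi:ℂ) * Complex.I * n / p)

lemma ec_add (p : ℕ) (m n : ℤ) : ec p (m + n) = ec p m * ec p n := by
  rw [ec, ec, ec, ← Complex.exp_add]
  congr 1
  push_cast
  ring

lemma ec_int_mul (p : ℕ) (hp : 0 < p) (t : ℤ) : ec p (p * t) = 1 := by
  have hpne : (p:ℂ) ≠ 0 := by exact_mod_cast hp.ne'
  rw [ec, show 2 * (Real.pi:ℂ) * Complex.I * (↑((p:ℤ) * t)) / p = t * (2 * (Real.pi:ℂ) * Complex.I) by
    push_cast; field_simp]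
  exact Complex.exp_int_mul_two_pi_mul_I t

lemma ec_pow (p : ℕ) (n : ℤ) (k : ℕ) : ec p (n * k) = (ec p n) ^ k := by
  rw [ec, ec, ← Complex.exp_nat_mul]
  congr 1
  push_cast
  ring

lemma ec_eq_one_iff (p : ℕ) (hp : 0 < p) (n : ℤ) : ec p n = 1 ↔ (p:ℤ) ∣ n := by
  have hpne : (p:ℂ) ≠ 0 := by exact_mod_cast hp.ne'
  have h2pi : (2 * (Real.pi:ℂ) * Complex.I) ≠ 0 := by
    simp [Real.pi_ne_zero, Complex.I_ne_zero]
  constructor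
  · intro h
    rw [ec, Complex.exp_eq_one_iff] at h
    obtain ⟨k, hk⟩ := h
    rw [div_eq_iff hpne] at hk
    have h2 : 2 * (Real.pi:ℂ) * Complex.I * n = 2 * (Real.pi:ℂ) * Complex.I * (k * p) := by
      rw [hk]; ring
    have h3 : n = k * p := by exact_mod_cast mul_left_cancel₀ h2pi h2
    exact ⟨k, by rw [h3]; ring⟩
  · rintro ⟨t, rfl⟩
    exact ec_int_mul p hp t

lemma sum_ec (p : ℕ) (hp : 0 < p) (j : ℤ) :
    ∑ k ∈ Finset.range p, ec p (j * k) = if (p:ℤ) ∣ j then (p:ℂ) else 0 := by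
  by_cases h : (p:ℤ) ∣ j
  · rw [if_pos h]
    obtain ⟨t, rfl⟩ := h
    have : ∀ k ∈ Finset.range p, ec p ((p:ℤ) * t * k) = 1 := by
      intro k _
      rw [show (p:ℤ) * t * k = (p:ℤ) * (t * k) by ring]
      exact ec_int_mul p hp (t * k)
    rw [Finset.sum_congr rfl this]
    simp
  · rw [if_neg h]
    have hz1 : ec p j ≠ 1 := fun c => h ((ec_eq_one_iff p hp j).mp c)
    have hzp : (ec p j) ^ p = 1 := by
      rw [← ec_pow, show (j * (p:ℕ) : ℤ) = (p:ℤ) * j by push_cast; ring]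
      exact ec_int_mul p hp j
    calc ∑ k ∈ Finset.range p, ec p (j * k) = ∑ k ∈ Finset.range p, (ec p j) ^ k := by
          exact Finset.sum_congr rfl fun k _ => ec_pow p j k
      _ = ((ec p j) ^ p - 1) / (ec p j - 1) := geom_sum_eq hz1 p
      _ = 0 := by rw [hzp]; simp

lemma weighted_geom (z : ℂ) (n : ℕ) :
    (z - 1) * ∑ μ ∈ Finset.range n, (μ:ℂ) * z ^ μ
      = n * z ^ n - (∑ μ ∈ Finset.range n, z ^ μ) * z := by
  induction n with
  | zero => simp
  | succ n ih =>
    rw [Finset.sum_range_succ, Finset.sum_range_succ]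
    push_cast
    ring_nf
    ring_nf at ih
    linear_combination ih
/- ### key lemmas -/

lemma key1 (p : ℕ) (hp : 0 < p) (m : ℤ) (hm : ¬ (p:ℤ) ∣ m) :
    ∑ μ ∈ Finset.range p, (saw ((μ:ℝ)/p) : ℂ) * ec p (m * μ)
      = (ec p m + 1) / (2 * (ec p m - 1)) := by
  set z := ec p m with hz
  have hz1 : z ≠ 1 := fun c => hm ((ec_eq_one_iff p hp m).mp c)
  have hz1' : z - 1 ≠ 0 := sub_ne_zero.mpr hz1
  have hpne : (p:ℂ) ≠ 0 := by exact_mod_cast hp.ne'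
  have hS : ∑ μ ∈ Finset.range p, z ^ μ = 0 := by
    have := sum_ec p hp m
    rw [if_neg hm] at this
    rw [← this]
    exact Finset.sum_congr rfl fun k _ => (ec_pow p m k).symm
  have hW : ∑ μ ∈ Finset.range p, (μ:ℂ) * z ^ μ = p / (z - 1) := by
    have h := weighted_geom z p
    have hzp : z ^ p = 1 := by
      rw [hz, ← ec_pow, show (m * (p:ℕ) : ℤ) = (p:ℤ) * m by push_cast; ring]
      exact ec_int_mul p hp m
    rw [hzp, hS] at h
    field_simp
    linear_combination h
  have hterm : ∀ μ ∈ Finset.range p, (saw ((μ:ℝ)/p) : ℂ) * ec p (m * μ)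
      = ((μ:ℂ)/p - 1/2) * z ^ μ + (if μ = 0 then (1:ℂ)/2 else 0) := by
    intro μ hμ
    rw [saw_term μ p hμ, ec_pow]
    rcases Nat.eq_zero_or_pos μ with h0 | h0
    · subst h0; push_cast; ring_nf
    · rw [if_neg h0.ne', if_neg h0.ne']
      push_cast
      ring
  rw [Finset.sum_congr rfl hterm, Finset.sum_add_distrib,
    Finset.sum_ite_eq' (Finset.range p) 0 (fun _ => (1:ℂ)/2),
    if_pos (Finset.mem_range.mpr hp)]
  have hsplit : ∑ μ ∈ Finset.range p, ((μ:ℂ)/p - 1/2) * z ^ μ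
      = (1/p) * (∑ μ ∈ Finset.range p, (μ:ℂ) * z ^ μ)
        - (1/2) * ∑ μ ∈ Finset.range p, z ^ μ := by
    rw [Finset.mul_sum, Finset.mul_sum, ← Finset.sum_sub_distrib]
    exact Finset.sum_congr rfl fun μ _ => by field_simp
  rw [hsplit, hS, hW]
  field_simp
  ring

lemma key2 (p : ℕ) (hp : 0 < p) (m : ℤ) (hm : ¬ (p:ℤ) ∣ m) :
    (Real.cot (Real.pi * m / p) : ℂ)
      = Complex.I * (ec p m + 1) / (ec p m - 1) := by
  have hpne : (p:ℝ) ≠ 0 := by positivity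
  have hsin : Real.sin (Real.pi * m / p) ≠ 0 := by
    rw [Ne, Real.sin_eq_zero_iff]
    rintro ⟨n, hn⟩
    apply hm
    refine ⟨n, ?_⟩
    rw [eq_div_iff hpne] at hn
    have h1 : Real.pi * (m:ℝ) = Real.pi * ((p:ℝ) * n) := by linear_combination -hn
    have h2 : (m:ℝ) = (p:ℝ) * n := mul_left_cancel₀ Real.pi_ne_zero h1
    exact_mod_cast h2
  set x : ℝ := Real.pi * m / p with hx
  set w : ℂ := Complex.exp (x * Complex.I) with hw
  have hw0 : w ≠ 0 := Complex.exp_ne_zero _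
  have hwsq : w ^ 2 = ec p m := by
    rw [hw, ec, ← Complex.exp_nat_mul]
    congr 1
    rw [hx]
    push_cast
    field_simp
  have hcos : (Real.cos x : ℂ) = (w + w⁻¹) / 2 := by
    rw [Complex.ofReal_cos, Complex.cos, hw, ← Complex.exp_neg]
    ring_nf
  have hsinC : (Real.sin x : ℂ) = (w⁻¹ - w) * Complex.I / 2 := by
    rw [Complex.ofReal_sin, Complex.sin, hw, ← Complex.exp_neg]
    ring_nf
  have hsin' : (Real.sin x : ℂ) ≠ 0 := by exact_mod_cast Complex.ofReal_ne_zero.mpr hsin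
  have hz1' : ec p m - 1 ≠ 0 := sub_ne_zero.mpr (fun c => hm ((ec_eq_one_iff p hp m).mp c))
  have hdenom : (w⁻¹ - w) * Complex.I / 2 ≠ 0 := hsinC ▸ hsin'
  rw [Real.cot_eq_cos_div_sin, Complex.ofReal_div, hcos, hsinC]
  rw [← hwsq] at hz1' ⊢
  rw [div_eq_div_iff hdenom hz1']
  field_simp
  ring_nf
  rw [Complex.I_sq]
  ring
lemma saw_mu0 (p : ℕ) (hp : 0 < p) (q ν : ℕ) :
    saw (((((-(q:ℤ) * ν) % p).toNat : ℕ) : ℝ) / p) = - saw ((q:ℝ) * ν / p) := by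
  have hpz : (0:ℤ) < p := by exact_mod_cast hp
  have hpne : (p:ℝ) ≠ 0 := by positivity
  set a : ℤ := -(q:ℤ) * ν with ha
  have hr0 : 0 ≤ a % p := Int.emod_nonneg a hpz.ne'
  have hcast : ((((a % p).toNat : ℕ)) : ℝ) = ((a % p : ℤ) : ℝ) := by
    exact_mod_cast Int.toNat_of_nonneg hr0
  have hdef : a % p = a - p * (a / p) := Int.emod_def a p
  have harg : ((a % p : ℤ) : ℝ) / p = -((q:ℝ) * ν / p) + ((-(a/p) : ℤ) : ℝ) := by
    rw [hdef, ha]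
    push_cast
    field_simp
    ring
  rw [hcast, harg, saw_add_int, saw_neg]

lemma cot_formula (p q : ℕ) (hp : 0 < p) (hcop : Nat.Coprime p q) :
    ∑ k ∈ Finset.range p, Real.cot (Real.pi * k / p) * Real.cot (Real.pi * q * k / p)
      = 4 * p * dedekindSum q p := by
  have hpne : (p:ℝ) ≠ 0 := by positivity
  have hpzne : ((p:ℤ)) ≠ 0 := by exact_mod_cast hp.ne'
  -- work in ℂ
  apply Complex.ofReal_injective
  rw [Complex.ofReal_sum]
  -- step 1 : termwise identity
  have hterm : ∀ k ∈ Finset.range p,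
      ((Real.cot (Real.pi * k / p) * Real.cot (Real.pi * q * k / p) : ℝ) : ℂ)
        = -4 * (∑ μ ∈ Finset.range p, (saw ((μ:ℝ)/p) : ℂ) * ec p ((k:ℤ) * μ))
            * (∑ ν ∈ Finset.range p, (saw ((ν:ℝ)/p) : ℂ) * ec p (((q:ℤ) * k) * ν)) := by
    intro k hk
    push_cast
    rcases Nat.eq_zero_or_pos k with h0 | h0
    · subst h0
      have he : ∀ μ ∈ Finset.range p, (saw ((μ:ℝ)/p) : ℂ) * ec p (((0:ℕ):ℤ) * μ)
          = (saw ((μ:ℝ)/p) : ℂ) := by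
        intro μ _
        rw [show (((0:ℕ):ℤ) * μ : ℤ) = ((p:ℤ) * 0) by push_cast; ring, ec_int_mul p hp 0]
        ring
      have hsum0 : (∑ μ ∈ Finset.range p, (saw ((μ:ℝ)/p) : ℂ) * ec p (((0:ℕ):ℤ) * μ)) = 0 := by
        rw [Finset.sum_congr rfl he, ← Complex.ofReal_sum, sum_saw p hp, Complex.ofReal_zero]
      rw [hsum0]
      norm_num [Complex.cot, Complex.sin_zero, Complex.cos_zero]
    · have hk1 : ¬ (p:ℤ) ∣ (k:ℤ) := by
        rw [Int.natCast_dvd_natCast]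
        exact Nat.not_dvd_of_pos_of_lt h0 (Finset.mem_range.mp hk)
      have hk2 : ¬ (p:ℤ) ∣ ((q:ℤ) * k) := by
        rw [show ((q:ℤ) * k) = ((q * k : ℕ) : ℤ) by push_cast; ring, Int.natCast_dvd_natCast]
        intro hd
        exact hk1 (Int.natCast_dvd_natCast.mpr
          (hcop.dvd_of_dvd_mul_left hd))
      have e1 := key1 p hp k hk1
      have e2 := key1 p hp ((q:ℤ) * k) hk2
      have c1 := key2 p hp k hk1
      have c2 := key2 p hp ((q:ℤ) * k) hk2
      have hz1 : ec p k - 1 ≠ 0 :=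
        sub_ne_zero.mpr (fun c => hk1 ((ec_eq_one_iff p hp _).mp c))
      have hz2 : ec p ((q:ℤ) * k) - 1 ≠ 0 :=
        sub_ne_zero.mpr (fun c => hk2 ((ec_eq_one_iff p hp _).mp c))
      rw [e1, e2]
      push_cast at c1 c2
      rw [show ((Real.pi:ℂ) * (q:ℕ) * (k:ℕ) / (p:ℕ) : ℂ) = ((Real.pi:ℂ) * ((q:ℕ) * (k:ℕ)) / (p:ℕ) : ℂ) by ring]
      rw [c1, c2]
      field_simp
      ring_nf
      rw [Complex.I_sq]
      ring
  rw [Finset.sum_congr rfl hterm]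
  -- step 2 : expand and collapse
  have hexp : ∀ k ∈ Finset.range p,
      -4 * (∑ μ ∈ Finset.range p, (saw ((μ:ℝ)/p) : ℂ) * ec p ((k:ℤ) * μ))
        * (∑ ν ∈ Finset.range p, (saw ((ν:ℝ)/p) : ℂ) * ec p (((q:ℤ) * k) * ν))
      = ∑ μ ∈ Finset.range p, ∑ ν ∈ Finset.range p,
          (-4 : ℂ) * (saw ((μ:ℝ)/p) : ℂ) * (saw ((ν:ℝ)/p) : ℂ)
            * ec p (((μ:ℤ) + q * ν) * k) := by
    intro k _
    rw [mul_assoc, Finset.sum_mul_sum, Finset.mul_sum]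
    refine Finset.sum_congr rfl fun μ _ => ?_
    rw [Finset.mul_sum]
    refine Finset.sum_congr rfl fun ν _ => ?_
    rw [show (((μ:ℤ) + q * ν) * k) = ((k:ℤ) * μ + ((q:ℤ) * k) * ν) by ring, ec_add]
    ring
  rw [Finset.sum_congr rfl hexp]
  rw [Finset.sum_comm]
  have hswap : ∀ μ ∈ Finset.range p,
      ∑ k ∈ Finset.range p, ∑ ν ∈ Finset.range p,
          (-4 : ℂ) * (saw ((μ:ℝ)/p) : ℂ) * (saw ((ν:ℝ)/p) : ℂ)
            * ec p (((μ:ℤ) + q * ν) * k)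
      = ∑ ν ∈ Finset.range p,
          (-4 : ℂ) * (saw ((μ:ℝ)/p) : ℂ) * (saw ((ν:ℝ)/p) : ℂ)
            * (if (p:ℤ) ∣ ((μ:ℤ) + q * ν) then (p:ℂ) else 0) := by
    intro μ _
    rw [Finset.sum_comm]
    refine Finset.sum_congr rfl fun ν _ => ?_
    rw [← Finset.mul_sum, sum_ec p hp ((μ:ℤ) + q * ν)]
  rw [Finset.sum_congr rfl hswap]
  rw [Finset.sum_comm]
  have hcollapse : ∀ ν ∈ Finset.range p,
      ∑ μ ∈ Finset.range p,
          (-4 : ℂ) * (saw ((μ:ℝ)/p) : ℂ) * (saw ((ν:ℝ)/p) : ℂ)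
            * (if (p:ℤ) ∣ ((μ:ℤ) + q * ν) then (p:ℂ) else 0)
      = 4 * p * (saw ((ν:ℝ)/p) : ℂ) * (saw ((q:ℝ) * ν / p) : ℂ) := by
    intro ν _
    have hpz : (0:ℤ) < p := by exact_mod_cast hp
    set a : ℤ := -(q:ℤ) * ν with ha
    set μ₀ : ℕ := (a % p).toNat with hμ₀
    have hr0 : 0 ≤ a % p := Int.emod_nonneg a hpz.ne'
    have hμ₀cast : ((μ₀ : ℕ) : ℤ) = a % p := Int.toNat_of_nonneg hr0
    have hμ₀mem : μ₀ ∈ Finset.range p := by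
      rw [Finset.mem_range]
      have := Int.emod_lt_of_pos a hpz
      omega
    have hiff : ∀ μ ∈ Finset.range p, (((p:ℤ) ∣ ((μ:ℤ) + q * ν)) ↔ μ = μ₀) := by
      intro μ hμ
      constructor
      · intro hd
        have hme : a ≡ (μ:ℤ) [ZMOD (p:ℤ)] := (Int.modEq_iff_dvd).mpr (by
          have : ((μ:ℤ) - a) = ((μ:ℤ) + q * ν) := by rw [ha]; ring
          rw [this]; exact hd)
        have h1 : a % (p:ℤ) = (μ:ℤ) % p := hme
        have h2 : (μ:ℤ) % p = μ := Int.emod_eq_of_lt (by positivity)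
          (by exact_mod_cast Finset.mem_range.mp hμ)
        omega
      · rintro rfl
        refine ⟨-(a / p), ?_⟩
        rw [hμ₀cast, Int.emod_def, ha]
        ring
    have hbody : ∀ μ ∈ Finset.range p,
        (-4 : ℂ) * (saw ((μ:ℝ)/p) : ℂ) * (saw ((ν:ℝ)/p) : ℂ)
            * (if (p:ℤ) ∣ ((μ:ℤ) + q * ν) then (p:ℂ) else 0)
        = if μ = μ₀ then (-4 : ℂ) * (saw ((μ:ℝ)/p) : ℂ) * (saw ((ν:ℝ)/p) : ℂ) * p else 0 := by
      intro μ hμ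
      rw [mul_ite, mul_zero, if_congr (hiff μ hμ) rfl rfl]
    rw [Finset.sum_congr rfl hbody,
      Finset.sum_ite_eq' (Finset.range p) μ₀
        (fun μ => (-4 : ℂ) * (saw ((μ:ℝ)/p) : ℂ) * (saw ((ν:ℝ)/p) : ℂ) * p),
      if_pos hμ₀mem]
    have hsawμ₀ : saw ((μ₀:ℝ)/p) = - saw ((q:ℝ) * ν / p) := saw_mu0 p hp q ν
    rw [hsawμ₀]
    push_cast
    ring
  rw [Finset.sum_congr rfl hcollapse]
  simp only [dedekindSum]
  push_cast
  rw [Finset.mul_sum]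
  refine Finset.sum_congr rfl fun ν _ => ?_
  push_cast
  ring
lemma sum_range_two_mul (f : ℕ → ℝ) (n : ℕ) :
    ∑ i ∈ Finset.range (2 * n), f i
      = ∑ j ∈ Finset.range n, f (2 * j) + ∑ j ∈ Finset.range n, f (2 * j + 1) := by
  induction n with
  | zero => simp
  | succ n ih =>
    rw [show 2 * (n + 1) = (2 * n + 1) + 1 by ring, Finset.sum_range_succ, Finset.sum_range_succ,
      ih, Finset.sum_range_succ, Finset.sum_range_succ]
    ring

theorem cot_sum_eq_dedekind (p q : ℕ) (hp : 0 < p) (hq : 0 < q)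
    (hcop : Nat.Coprime p q) (hodd : Odd q) :
    (1 / (p : ℝ)) * ∑ k ∈ Finset.range p,
        Real.cot (Real.pi * (2 * (k : ℝ) + 1) / (2 * p))
          * Real.cot (Real.pi * q * (2 * (k : ℝ) + 1) / (2 * p))
      = -4 * dedekindSum (q : ℤ) p + 8 * dedekindSum (q : ℤ) (2 * p) := by
  have hpne : (p:ℝ) ≠ 0 := by positivity
  have h2p : 0 < 2 * p := by omega
  have hcop2 : Nat.Coprime (2 * p) q := by
    refine Nat.Coprime.mul ?_ hcop
    rw [Nat.Prime.coprime_iff_not_dvd Nat.prime_two]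
    rw [Nat.two_dvd_ne_zero]
    exact Nat.odd_iff.mp hodd
  have A := cot_formula (2 * p) q h2p hcop2
  have B := cot_formula p q hp hcop
  rw [sum_range_two_mul
    (fun k => Real.cot (Real.pi * k / (2*p:ℕ)) * Real.cot (Real.pi * q * k / (2*p:ℕ))) p] at A
  have heven : ∀ j ∈ Finset.range p,
      Real.cot (Real.pi * ((2*j : ℕ):ℝ) / ((2*p:ℕ):ℝ)) * Real.cot (Real.pi * q * ((2*j:ℕ):ℝ) / ((2*p:ℕ):ℝ))
        = Real.cot (Real.pi * (j:ℝ) / p) * Real.cot (Real.pi * q * (j:ℝ) / p) := by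
    intro j _
    have h1 : Real.pi * ((2*j : ℕ):ℝ) / ((2*p:ℕ):ℝ) = Real.pi * (j:ℝ) / p := by
      push_cast; field_simp
    have h2 : Real.pi * q * ((2*j : ℕ):ℝ) / ((2*p:ℕ):ℝ) = Real.pi * q * (j:ℝ) / p := by
      push_cast; field_simp
    rw [h1, h2]
  rw [Finset.sum_congr rfl heven, B] at A
  have hodd' : ∀ j ∈ Finset.range p,
      Real.cot (Real.pi * ((2*j+1 : ℕ):ℝ) / ((2*p:ℕ):ℝ)) * Real.cot (Real.pi * q * ((2*j+1:ℕ):ℝ) / ((2*p:ℕ):ℝ))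
        = Real.cot (Real.pi * (2 * (j:ℝ) + 1) / (2 * p)) * Real.cot (Real.pi * q * (2 * (j:ℝ) + 1) / (2 * p)) := by
    intro j _
    norm_num
  rw [Finset.sum_congr rfl hodd'] at A
  -- A : 4*p*ded p + ∑(odd terms) = 4*(2p)*ded (2p)
  have hA : ∑ k ∈ Finset.range p,
      Real.cot (Real.pi * (2 * (k:ℝ) + 1) / (2 * p)) * Real.cot (Real.pi * q * (2 * (k:ℝ) + 1) / (2 * p))
      = 8 * p * dedekindSum (q:ℤ) (2*p) - 4 * p * dedekindSum (q:ℤ) p := by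
    push_cast at A
    linarith
  rw [hA]
  field_simp
  ring
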